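/- Let G be a finite set of criteria, O a set of unordered pairs of distinct criteria, and m a Möbius representation with m({g}) for g ∈ G and m({g_i,g_j}) for {g_i,g_j} ∈ O (zero on all other subsets). If (i) for every g ∈ G and every T ⊆ G \ {g}, m({g}) + ∑_{g_i ∈ T, {g_i,g} ∈ O} m({g_i,g}) ≥ 0, then the set function μ(A) = ∑_{g ∈ A} m({g}) + ∑_{{g_i,g_j} ⊆ A, {g_i,g_j} ∈ O} m({g_i,g_j}) is monotone: A ⊆ B ⊆ G implies μ(A) ≤ μ(B). -/
import Mathlib


theorem stmt_7 {ι : Type*} [Fintype ι] [DecidableEq ι]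
    (O : Finset (Finset ι)) (hO : ∀ p ∈ O, p.card = 2)
    (m : Finset ι → ℝ)
    (μ : Finset ι → ℝ)
    (hμ : ∀ A, μ A = (∑ g ∈ A, m {g}) + ∑ p ∈ O.filter (fun p => p ⊆ A), m p)
    (hmono : ∀ g : ι, ∀ T : Finset ι, g ∉ T →
      0 ≤ m {g} + ∑ gi ∈ T.filter (fun gi => {gi, g} ∈ O), m {gi, g}) :
    ∀ A B : Finset ι, A ⊆ B → μ A ≤ μ B := by
  have key : ∀ (g : ι) (A : Finset ι), g ∉ A → μ A ≤ μ (insert g A) := by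
    intro g A hg
    rw [hμ, hμ, Finset.sum_insert hg]
    have hsplit : ∑ p ∈ O.filter (fun p => p ⊆ insert g A), m p
        = (∑ p ∈ O.filter (fun p => p ⊆ A), m p)
          + ∑ gi ∈ A.filter (fun gi => {gi, g} ∈ O), m {gi, g} := by
      rw [← Finset.sum_filter_add_sum_filter_not (O.filter (fun p => p ⊆ insert g A))
        (fun p => g ∉ p)]
      congr 1
      · apply Finset.sum_congr _ (fun _ _ => rfl)
        ext p
        simp only [Finset.mem_filter, Finset.filter_filter]
        constructor
        · rintro ⟨hpO, hsub, hgp⟩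
          refine ⟨hpO, fun x hx => ?_⟩
          rcases Finset.mem_insert.mp (hsub hx) with h | h
          · exact absurd (h ▸ hx) hgp
          · exact h
        · rintro ⟨hpO, hsub⟩
          exact ⟨hpO, hsub.trans (Finset.subset_insert _ _), fun hgp => hg (hsub hgp)⟩
      · simp only [Finset.filter_filter, not_not]
        symm
        refine Finset.sum_bij (fun gi _ => {gi, g}) ?_ ?_ ?_ ?_
        · intro gi hgi
          simp only [Finset.mem_filter] at hgi ⊢
          refine ⟨hgi.2, ?_, by simp⟩
          intro x hx
          rcases Finset.mem_insert.mp hx with h | h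
          · exact Finset.mem_insert_of_mem (h ▸ hgi.1)
          · simp only [Finset.mem_singleton] at h
            exact h ▸ Finset.mem_insert_self _ _
        · intro a ha b hb hab
          simp only [Finset.mem_filter] at ha hb
          have haA : a ∈ A := ha.1
          have hbA : b ∈ A := hb.1
          have hab' : ({a, g} : Finset ι) = {b, g} := hab
          have : a ∈ ({b, g} : Finset ι) := hab' ▸ Finset.mem_insert_self a {g}
          rcases Finset.mem_insert.mp this with h | h
          · exact h
          · simp only [Finset.mem_singleton] at h
            exact absurd (h ▸ haA) hg
        · intro p hp
          simp only [Finset.mem_filter] at hp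
          obtain ⟨hpO, hsub, hgp⟩ := hp
          obtain ⟨x, y, hxy, hpxy⟩ := Finset.card_eq_two.mp (hO p hpO)
          have hgxy : g = x ∨ g = y := by
            have := hpxy ▸ hgp
            simpa using this
          rcases hgxy with rfl | rfl
          · refine ⟨y, ?_, ?_⟩
            · simp only [Finset.mem_filter]
              have hyA : y ∈ A := by
                have : y ∈ insert g A := hsub (by simp [hpxy])
                rcases Finset.mem_insert.mp this with h | h
                · exact absurd h.symm hxy
                · exact h
              refine ⟨hyA, ?_⟩
              have : ({y, g} : Finset ι) = p := by
                rw [hpxy]; ext z; simp; tauto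
              exact this ▸ hpO
            · show ({y, g} : Finset ι) = p
              rw [hpxy]; ext z; simp; tauto
          · refine ⟨x, ?_, ?_⟩
            · simp only [Finset.mem_filter]
              have hxA : x ∈ A := by
                have : x ∈ insert g A := hsub (by simp [hpxy])
                rcases Finset.mem_insert.mp this with h | h
                · exact absurd h hxy
                · exact h
              refine ⟨hxA, ?_⟩
              have : ({x, g} : Finset ι) = p := by rw [hpxy]
              exact this ▸ hpO
            · show ({x, g} : Finset ι) = p
              rw [hpxy]
        · intros; rfl
    rw [hsplit]
    have := hmono g A hg
    linarith
  intro A B hAB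
  have hstep : ∀ S : Finset ι, μ A ≤ μ (A ∪ S) := by
    intro S
    induction S using Finset.induction_on with
    | empty => simp
    | @insert a S haS ih =>
      by_cases ha : a ∈ A ∪ S
      · rw [Finset.union_insert, Finset.insert_eq_self.mpr ha]
        exact ih
      · rw [Finset.union_insert]
        exact ih.trans (key a (A ∪ S) ha)
  have : B = A ∪ B := (Finset.union_eq_right.mpr hAB).symm
  rw [this]
  exact hstep B
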